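/- Let (M_α)_{α ∈ A} be a collection of persistence modules over a totally ordered set T such that the product ∏_α M_α is q-tame. Then the canonical inclusion ⊕_α M_α → ∏_α M_α is a weak isomorphism, i.e., its kernel and cokernel are ephemeral. -/

import Mathlib

open CategoryTheory CategoryTheory.Limits

set_option maxHeartbeats 1000000
set_option synthInstance.maxHeartbeats 200000

/-- A persistence module over a totally ordered set `T`: a functor from `T` (viewed as a
category via its order) to the category of `F`-vector spaces. -/
abbrev PersistenceModule (F : Type) [Field F] (T : Type) [LinearOrder T] :=
  T ⥤ ModuleCat.{0} F

variable (F : Type) [Field F] (T : Type) [LinearOrder T]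

/-- The inclusion functor of the strict up-set of `t` into `T`. -/
def upFunctor (t : T) : {s : T // t < s} ⥤ T :=
  Monotone.functor (f := (Subtype.val : {s : T // t < s} → T)) (fun _ _ h => h)

/-- The inclusion functor of the strict down-set of `t` into `T`. -/
def downFunctor (t : T) : {s : T // s < t} ⥤ T :=
  Monotone.functor (f := (Subtype.val : {s : T // s < t} → T)) (fun _ _ h => h)

/-- `underline M`, with `(underline M)_t = lim_{s > t} M_s` (the limit over the empty
category being `0`). -/
noncomputable def underlinePM (M : PersistenceModule F T) : PersistenceModule F T where
  obj t := limit (upFunctor T t ⋙ M)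
  map {s t} f := limit.lift (upFunctor T t ⋙ M)
    { pt := limit (upFunctor T s ⋙ M)
      π :=
        { app := fun u => limit.π (upFunctor T s ⋙ M) ⟨u.1, lt_of_le_of_lt (leOfHom f) u.2⟩
          naturality := fun u v g => by
            exact (Category.id_comp _).trans (limit.w (upFunctor T s ⋙ M) (homOfLE (leOfHom g))).symm } }
  map_id t := by
    apply limit.hom_ext
    intro u
    simp
  map_comp {s t u} f g := by
    apply limit.hom_ext
    intro v
    simp
    symm
    exact limit.lift_π _ _

/-- `overline M`, with `(overline M)_t = colim_{s < t} M_s` (the colimit over the empty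
category being `0`). -/
noncomputable def overlinePM (M : PersistenceModule F T) : PersistenceModule F T where
  obj t := colimit (downFunctor T t ⋙ M)
  map {s t} f := colimit.desc (downFunctor T s ⋙ M)
    { pt := colimit (downFunctor T t ⋙ M)
      ι :=
        { app := fun u => colimit.ι (downFunctor T t ⋙ M) ⟨u.1, lt_of_lt_of_le u.2 (leOfHom f)⟩
          naturality := fun u v g => by
            have h : (⟨u.1, lt_of_lt_of_le u.2 (leOfHom f)⟩ : {x : T // x < t}) ⟶
                ⟨v.1, lt_of_lt_of_le v.2 (leOfHom f)⟩ := homOfLE (leOfHom g)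
            exact (colimit.w (downFunctor T t ⋙ M) h).trans (Category.comp_id _).symm } }
  map_id t := by
    apply colimit.hom_ext
    intro u
    simp
  map_comp {s t u} f g := by
    apply colimit.hom_ext
    intro v
    simp
    symm
    exact colimit.ι_desc _ _

/-- The canonical morphism `M ⟶ underline M` given by the universal property of the limits. -/
noncomputable def toUnderline (M : PersistenceModule F T) : M ⟶ underlinePM F T M where
  app t := limit.lift (upFunctor T t ⋙ M)
    { pt := M.obj t
      π :=
        { app := fun u => M.map (homOfLE u.2.le)
          naturality := fun u v g => by
            dsimp
            rw [Category.id_comp, ← M.map_comp]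
            rfl } }
  naturality s t f := by
    apply limit.hom_ext
    intro u
    simp only [underlinePM, Category.assoc, limit.lift_π, ← M.map_comp]
    symm
    exact limit.lift_π _ _

/-- The canonical morphism `overline M ⟶ M` given by the universal property of the colimits. -/
noncomputable def fromOverline (M : PersistenceModule F T) : overlinePM F T M ⟶ M where
  app t := colimit.desc (downFunctor T t ⋙ M)
    { pt := M.obj t
      ι :=
        { app := fun u => M.map (homOfLE u.2.le)
          naturality := fun u v g => by
            dsimp
            rw [Category.comp_id, ← M.map_comp]
            rfl } }
  naturality s t f := by
    apply colimit.hom_ext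
    intro u
    simp only [overlinePM, colimit.ι_desc_assoc, colimit.ι_desc, ← M.map_comp]
    exact colimit.ι_desc _ _

/-- `M` is upper semi-continuous if the canonical map `M_t → lim_{s > t} M_s` is an
isomorphism for all `t`. -/
noncomputable def IsUSC (M : PersistenceModule F T) : Prop :=
  ∀ t : T, IsIso ((toUnderline F T M).app t)

/-- `M` is lower semi-continuous if the canonical map `colim_{s < t} M_s → M_t` is an
isomorphism for all `t`. -/
noncomputable def IsLSC (M : PersistenceModule F T) : Prop :=
  ∀ t : T, IsIso ((fromOverline F T M).app t)

/-- `M` is ephemeral if all structure maps `M_{s,t}` with `s < t` vanish. -/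
def Ephemeral (M : PersistenceModule F T) : Prop :=
  ∀ s t : T, ∀ h : s < t, M.map (homOfLE h.le) = 0

/-- `M` is q-tame if all structure maps `M_{s,t}` with `s < t` have finite rank. -/
def QTame (M : PersistenceModule F T) : Prop :=
  ∀ s t : T, ∀ h : s < t, Module.Finite F (LinearMap.range (M.map (homOfLE h.le)).hom)

/-- A morphism of persistence modules is a weak isomorphism if its kernel and cokernel
are ephemeral. -/
noncomputable def IsWeakIso {M N : PersistenceModule F T} (φ : M ⟶ N) : Prop :=
  Ephemeral F T (kernel φ) ∧ Ephemeral F T (cokernel φ)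

open Classical

/-- The interval module `C(I)`: the field `F` at points of `I` with identity structure
maps inside `I`, and `0` elsewhere (in particular `C(∅) = 0`). -/
noncomputable def intervalModule (I : Set T) : PersistenceModule F T where
  obj t := ModuleCat.of F (↥(if t ∈ I then (⊤ : Submodule F F) else (⊥ : Submodule F F)))
  map {s t} f :=
    if h : Set.Icc s t ⊆ I then
      ModuleCat.ofHom (Submodule.inclusion (by
        rw [if_pos (h (Set.right_mem_Icc.mpr (leOfHom f)))]
        exact le_top))
    else 0
  map_id t := by
    by_cases ht : t ∈ I
    · rw [dif_pos (by simpa using ht)]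
      rfl
    · have h : ¬ Set.Icc t t ⊆ I := by simpa using ht
      rw [dif_neg h]
      have hs : Subsingleton (↥(if t ∈ I then (⊤ : Submodule F F) else (⊥ : Submodule F F))) := by
        rw [if_neg ht]
        infer_instance
      apply ModuleCat.hom_ext
      apply LinearMap.ext
      intro x
      exact @Subsingleton.elim _ hs _ _
  map_comp {s t u} f g := by
    by_cases h : Set.Icc s u ⊆ I
    · have h1 : Set.Icc s t ⊆ I :=
        fun x hx => h ⟨hx.1, le_trans hx.2 (leOfHom g)⟩
      have h2 : Set.Icc t u ⊆ I :=
        fun x hx => h ⟨le_trans (leOfHom f) hx.1, hx.2⟩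
      rw [dif_pos h, dif_pos h1, dif_pos h2]
      rfl
    · rw [dif_neg h]
      by_cases h1 : Set.Icc s t ⊆ I
      · have h2 : ¬ Set.Icc t u ⊆ I := fun h2 => h (by
          intro x hx
          rcases le_total x t with hxt | htx
          · exact h1 ⟨hx.1, hxt⟩
          · exact h2 ⟨htx, hx.2⟩)
        rw [dif_pos h1, dif_neg h2, Limits.comp_zero]
      · rw [dif_neg h1, Limits.zero_comp]

/-- Functoriality of `overline` on morphisms. -/
noncomputable def overlineMap {M N : PersistenceModule F T} (φ : M ⟶ N) :
    overlinePM F T M ⟶ overlinePM F T N where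
  app t := colimMap (Functor.whiskerLeft (downFunctor T t) φ)
  naturality s t f := by
    apply colimit.hom_ext
    intro u
    simp [overlinePM]
    exact ι_colimMap _ _

/-- Functoriality of `underline` on morphisms. -/
noncomputable def underlineMap {M N : PersistenceModule F T} (φ : M ⟶ N) :
    underlinePM F T M ⟶ underlinePM F T N where
  app t := limMap (Functor.whiskerLeft (upFunctor T t) φ)
  naturality s t f := by
    apply limit.hom_ext
    intro u
    simp [underlinePM]
    symm
    exact limMap_π _ _

/-- The radical of a persistence module: the image of the canonical morphism
`overline M ⟶ M`. -/
noncomputable def radPM (M : PersistenceModule F T) : PersistenceModule F T :=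
  image (fromOverline F T M)

/-- The canonical morphism from the direct sum to the product of a collection of
persistence modules. -/
noncomputable def sumToProd {A : Type} (M : A → PersistenceModule F T) :
    (∐ M) ⟶ (∏ᶜ M) :=
  Sigma.desc fun a => Pi.lift fun b =>
    if h : a = b then eqToHom (congrArg M h) else 0

/-- The pointwise dual persistence module `M*`, indexed by the opposite order. -/
noncomputable def dualPM (M : PersistenceModule F T) : PersistenceModule F Tᵒᵈ where
  obj t := ModuleCat.of F (Module.Dual F (M.obj (OrderDual.ofDual t)))
  map {s t} f :=
    ModuleCat.ofHom (M.map (homOfLE (leOfHom f : OrderDual.ofDual t ≤ OrderDual.ofDual s))).hom.dualMap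
  map_id t := by
    rw [show (homOfLE _ : OrderDual.ofDual t ⟶ OrderDual.ofDual t) = 𝟙 _ from rfl,
      M.map_id]
    rfl
  map_comp {s t u} f g := by
    rw [show (homOfLE _ : OrderDual.ofDual u ⟶ OrderDual.ofDual s) =
        (homOfLE (leOfHom g : OrderDual.ofDual u ≤ OrderDual.ofDual t)) ≫
        (homOfLE (leOfHom f : OrderDual.ofDual t ≤ OrderDual.ofDual s)) from rfl,
      M.map_comp]
    rfl

/-- `I` is an interval in a totally ordered set: if `s ≤ t ≤ u` with `s, u ∈ I`, then `t ∈ I`. -/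
def IsInterval {T : Type*} [LinearOrder T] (I : Set T) : Prop :=
  ∀ ⦃s t u : T⦄, s ≤ t → t ≤ u → s ∈ I → u ∈ I → t ∈ I

/-- `underline I`: the set of `t` such that `I ∩ {s | t < s}` is nonempty and coinitial
in `{s | t < s}`. -/
def underlineSet {T : Type*} [LinearOrder T] (I : Set T) : Set T :=
  {t | (I ∩ Set.Ioi t).Nonempty ∧ ∀ s ∈ Set.Ioi t, ∃ u ∈ I ∩ Set.Ioi t, u ≤ s}

/-- `overline I`: the set of `t` such that `I ∩ {s | s < t}` is nonempty and cofinal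
in `{s | s < t}`. -/
def overlineSet {T : Type*} [LinearOrder T] (I : Set T) : Set T :=
  {t | (I ∩ Set.Iio t).Nonempty ∧ ∀ s ∈ Set.Iio t, ∃ u ∈ I ∩ Set.Iio t, s ≤ u}

/-- `rad I = I ∩ overline I`. -/
def radSet {T : Type*} [LinearOrder T] (I : Set T) : Set T :=
  I ∩ overlineSet I

section AuxWeakIso

open DirectSum

variable {F : Type} [Field F] {T : Type} [LinearOrder T] {A : Type}
  (M : A → PersistenceModule F T)

/-- Evaluation of the categorical product at a point, compared with the concrete product. -/
noncomputable def prodEvalIso (t : T) :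
    (∏ᶜ M : PersistenceModule F T).obj t ≅ ModuleCat.of F (∀ a, (M a).obj t) :=
  asIso (piComparison ((evaluation T (ModuleCat.{0} F)).obj t) M) ≪≫
    ModuleCat.piIsoPi (fun a => (M a).obj t)

lemma prodEvalIso_comp_proj (t : T) (a : A) :
    (prodEvalIso M t).hom ≫
      ModuleCat.ofHom (LinearMap.proj (R := F) (φ := fun a => (M a).obj t) a) =
      (Pi.π M a).app t := by
  dsimp [prodEvalIso]
  rw [Category.assoc]
  erw [ModuleCat.piIsoPi_hom_ker_subtype]
  exact piComparison_comp_π ((evaluation T (ModuleCat.{0} F)).obj t) M a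

lemma prodEvalIso_apply (t : T) (y : (∏ᶜ M : PersistenceModule F T).obj t) (a : A) :
    (prodEvalIso M t).hom y a = (Pi.π M a).app t y := by
  have := ConcreteCategory.congr_hom (prodEvalIso_comp_proj M t a) y
  exact this

/-- Evaluation of the categorical coproduct at a point, compared with the direct sum. -/
noncomputable def sumEvalIso (t : T) :
    ModuleCat.of F (⨁ a, (M a).obj t) ≅ (∐ M : PersistenceModule F T).obj t :=
  (ModuleCat.coprodIsoDirectSum (fun a => (M a).obj t)).symm ≪≫
    asIso (sigmaComparison ((evaluation T (ModuleCat.{0} F)).obj t) M)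

/-- The canonical map from the direct sum into the product of vector spaces. -/
noncomputable def toPiLM (t : T) : (⨁ a, (M a).obj t) →ₗ[F] ∀ a, (M a).obj t :=
  LinearMap.pi fun a => DirectSum.component F A (fun a => (M a).obj t) a

lemma toPiLM_apply (t : T) (d : ⨁ a, (M a).obj t) (a : A) :
    toPiLM M t d a = d a := rfl

lemma toPiLM_injective (t : T) : Function.Injective (toPiLM M t) := by
  intro x y hxy
  exact DFunLike.ext _ _ fun a => congrFun hxy a

lemma key_comp (t : T) :
    ((prodEvalIso M t).hom.hom : _ →ₗ[F] _).comp
      ((((sumToProd F T M).app t).hom : _ →ₗ[F] _).comp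
        ((sumEvalIso M t).hom.hom : _ →ₗ[F] _)) = toPiLM M t := by
  apply DirectSum.linearMap_ext
  intro a
  apply LinearMap.ext
  intro x
  funext b
  -- unfold the left hand side
  have h1 : (sumEvalIso M t).hom (DirectSum.lof F A (fun a => (M a).obj t) a x) =
      (Sigma.ι M a).app t x := by
    have e1 : (ModuleCat.coprodIsoDirectSum fun a => (M a).obj t).inv
        (DirectSum.lof F A (fun a => (M a).obj t) a x) =
        (Sigma.ι (fun a => (M a).obj t) a) x :=
      ConcreteCategory.congr_hom (ModuleCat.lof_coprodIsoDirectSum_inv (fun a => (M a).obj t) a) x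
    have e2 : (sigmaComparison ((evaluation T (ModuleCat.{0} F)).obj t) M)
        ((Sigma.ι (fun a => (M a).obj t) a) x) = ((Sigma.ι M a).app t) x :=
      ConcreteCategory.congr_hom (ι_comp_sigmaComparison ((evaluation T (ModuleCat.{0} F)).obj t) M a) x
    show (sigmaComparison ((evaluation T (ModuleCat.{0} F)).obj t) M)
        ((ModuleCat.coprodIsoDirectSum fun a => (M a).obj t).inv
          (DirectSum.lof F A (fun a => (M a).obj t) a x)) = _
    rw [e1]
    exact e2
  have h2 : Sigma.ι M a ≫ sumToProd F T M =
      Pi.lift fun b => if h : a = b then eqToHom (congrArg M h) else 0 := by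
    simp [sumToProd]
  have h3 : ∀ (y : (∏ᶜ M : PersistenceModule F T).obj t),
      (prodEvalIso M t).hom y b = (Pi.π M b).app t y := fun y => prodEvalIso_apply M t y b
  show (prodEvalIso M t).hom ((sumToProd F T M).app t ((sumEvalIso M t).hom
    (DirectSum.lof F A (fun a => (M a).obj t) a x))) b =
    toPiLM M t (DirectSum.lof F A (fun a => (M a).obj t) a x) b
  rw [h1, h3]
  have h4 : (Sigma.ι M a).app t ≫ (sumToProd F T M).app t ≫ (Pi.π M b).app t =
      ((Sigma.ι M a ≫ sumToProd F T M ≫ Pi.π M b)).app t := by simp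
  have h5 : Sigma.ι M a ≫ sumToProd F T M ≫ Pi.π M b =
      (if h : a = b then eqToHom (congrArg M h) else 0) := by
    rw [← Category.assoc, h2]
    simp
  have h6 := ConcreteCategory.congr_hom (congrArg (fun (α : M a ⟶ M b) => α.app t)
    (h5)) x
  have h7 : (Pi.π M b).app t ((sumToProd F T M).app t ((Sigma.ι M a).app t x)) =
      ((if h : a = b then eqToHom (congrArg M h) else 0 : M a ⟶ M b)).app t x := by
    rw [← h5]; rfl
  rw [h7, toPiLM_apply]
  by_cases hab : a = b
  · subst hab
    rw [dif_pos rfl]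
    erw [DirectSum.lof_apply]
    rfl
  · rw [dif_neg hab]
    rw [DirectSum.lof_eq_of]
    have : (DirectSum.of (fun a => (M a).obj t) a x) b = 0 := by
      exact DFinsupp.single_eq_of_ne (Ne.symm hab)
    rw [this]
    rfl

lemma sumToProd_app_injective (t : T) :
    Function.Injective ((sumToProd F T M).app t) := by
  intro u v huv
  have hc := key_comp M
  have h1 : ∀ w, (prodEvalIso M t).hom ((sumToProd F T M).app t
      ((sumEvalIso M t).hom w)) = toPiLM M t w :=
    fun w => DFunLike.congr_fun (hc t) w
  have h2 : toPiLM M t ((sumEvalIso M t).inv u) = toPiLM M t ((sumEvalIso M t).inv v) := by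
    rw [← h1, ← h1]
    congr 1
    show (sumToProd F T M).app t (((sumEvalIso M t).inv ≫ (sumEvalIso M t).hom) u) = _
    rw [Iso.inv_hom_id]
    show (sumToProd F T M).app t u =
      (sumToProd F T M).app t (((sumEvalIso M t).inv ≫ (sumEvalIso M t).hom) v)
    rw [Iso.inv_hom_id]
    exact huv
  have h3 := toPiLM_injective M t h2
  calc u = ((sumEvalIso M t).inv ≫ (sumEvalIso M t).hom) u := by rw [Iso.inv_hom_id]; rfl
    _ = (sumEvalIso M t).hom ((sumEvalIso M t).inv u) := rfl
    _ = (sumEvalIso M t).hom ((sumEvalIso M t).inv v) := by rw [h3]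
    _ = ((sumEvalIso M t).inv ≫ (sumEvalIso M t).hom) v := rfl
    _ = v := by rw [Iso.inv_hom_id]; rfl

lemma pi_naturality_apply {s t : T} (f : s ⟶ t) (b : A)
    (x : (∏ᶜ M : PersistenceModule F T).obj s) :
    (Pi.π M b).app t ((∏ᶜ M : PersistenceModule F T).map f x) =
      (M b).map f ((Pi.π M b).app s x) := by
  have := ConcreteCategory.congr_hom ((Pi.π M b).naturality f) x
  exact this

lemma support_finite {s t : T} (h : s < t) (hq : QTame F T (∏ᶜ M)) :
    {a : A | (M a).map (homOfLE h.le) ≠ 0}.Finite := by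
  classical
  set f : s ⟶ t := homOfLE h.le with hf
  set S := {a : A | (M a).map f ≠ 0} with hS
  by_contra hinf
  haveI := hq s t h
  have hx : ∀ a : S, ∃ x : (M a.1).obj s, (M a.1).map f x ≠ 0 := by
    intro a
    by_contra h'
    push_neg at h'
    exact a.2 (ModuleCat.hom_ext (LinearMap.ext h'))
  choose x hxne using hx
  let z : S → (∏ᶜ M : PersistenceModule F T).obj s :=
    fun a => (prodEvalIso M s).inv (Pi.single (M := fun b => ((M b).obj s : Type)) a.1 (x a))
  let y : S → (∏ᶜ M : PersistenceModule F T).obj t :=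
    fun a => (∏ᶜ M : PersistenceModule F T).map f (z a)
  have hπz : ∀ (a : S) (b : A), (Pi.π M b).app s (z a) = Pi.single (M := fun b => ((M b).obj s : Type)) a.1 (x a) b := by
    intro a b
    have := prodEvalIso_apply M s (z a) b
    rw [← this]
    show ((prodEvalIso M s).inv ≫ (prodEvalIso M s).hom)
      (Pi.single (M := fun b => ((M b).obj s : Type)) a.1 (x a)) b = _
    rw [Iso.inv_hom_id]
    rfl
  have hy : ∀ a : S, (prodEvalIso M t).hom (y a) = Pi.single (M := fun b => ((M b).obj t : Type)) a.1 ((M a.1).map f (x a)) := by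
    intro a
    funext b
    rw [prodEvalIso_apply]
    show (Pi.π M b).app t ((∏ᶜ M : PersistenceModule F T).map f (z a)) = _
    rw [pi_naturality_apply, hπz]
    by_cases hab : a.1 = b
    · subst hab
      rw [Pi.single_eq_same, Pi.single_eq_same]
    · rw [Pi.single_eq_of_ne (Ne.symm hab), Pi.single_eq_of_ne (Ne.symm hab), map_zero]
  have hli0 : LinearIndependent F
      (fun a : S => Pi.single (M := fun b => ((M b).obj t : Type)) a.1 ((M a.1).map f (x a))) := by
    rw [linearIndependent_iff']
    intro sfin g hsum i hi
    have := congrArg (fun (v : ∀ a, (M a).obj t) => v i.1) hsum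
    dsimp at this
    rw [Finset.sum_apply] at this
    rw [Finset.sum_eq_single i] at this
    · rw [Pi.smul_apply, Pi.single_eq_same] at this
      rcases smul_eq_zero.mp this with hg | hv
      · exact hg
      · exact absurd hv (hxne i)
    · intro b _ hbi
      rw [Pi.smul_apply, Pi.single_eq_of_ne, smul_zero]
      exact fun hc => hbi (Subtype.ext hc).symm
    · intro hni
      exact absurd hi hni
  have hli1 : LinearIndependent F y := by
    have : (fun a : S => ((prodEvalIso M t).hom.hom : _ →ₗ[F] _) (y a)) =
        fun a : S => Pi.single (M := fun b => ((M b).obj t : Type)) a.1 ((M a.1).map f (x a)) :=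
      funext hy
    apply LinearIndependent.of_comp ((prodEvalIso M t).hom.hom : _ →ₗ[F] _)
    rw [show (((prodEvalIso M t).hom.hom : _ →ₗ[F] _) ∘ y) =
      fun a : S => ((prodEvalIso M t).hom.hom : _ →ₗ[F] _) (y a) from rfl, this]
    exact hli0
  have hmem : ∀ a : S, y a ∈ LinearMap.range
      (((∏ᶜ M : PersistenceModule F T).map f).hom : _ →ₗ[F] _) := fun a => ⟨z a, rfl⟩
  have hli2 : LinearIndependent F
      (fun a : S => (⟨y a, hmem a⟩ :
        LinearMap.range (((∏ᶜ M : PersistenceModule F T).map f).hom : _ →ₗ[F] _))) := by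
    apply LinearIndependent.of_comp
      (LinearMap.range (((∏ᶜ M : PersistenceModule F T).map f).hom : _ →ₗ[F] _)).subtype
    exact hli1
  have hfin : Finite S := hli2.finite
  exact hinf (Set.toFinite S)

lemma prod_map_mem_range {s t : T} (h : s < t) (hq : QTame F T (∏ᶜ M))
    (x : (∏ᶜ M : PersistenceModule F T).obj s) :
    (∏ᶜ M : PersistenceModule F T).map (homOfLE h.le) x ∈
      LinearMap.range (((sumToProd F T M).app t).hom : _ →ₗ[F] _) := by
  classical
  set f : s ⟶ t := homOfLE h.le with hf
  have hS := support_finite M h hq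
  set z : ∀ a, (M a).obj t :=
    (prodEvalIso M t).hom ((∏ᶜ M : PersistenceModule F T).map f x) with hz
  have hsupp : ∀ b, b ∉ {a : A | (M a).map f ≠ 0} → z b = 0 := by
    intro b hb
    have hb0 : (M b).map f = 0 := not_not.mp hb
    rw [hz, prodEvalIso_apply, pi_naturality_apply, hb0]
    rfl
  set d : ⨁ a, (M a).obj t :=
    DirectSum.mk (fun a => (M a).obj t) hS.toFinset (fun a => z a.1) with hd
  have hdz : toPiLM M t d = z := by
    funext b
    rw [toPiLM_apply]
    by_cases hb : b ∈ hS.toFinset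
    · rw [hd]
      exact DirectSum.mk_apply_of_mem hb
    · rw [hd]
      rw [DirectSum.mk_apply_of_notMem hb]
      rw [hsupp b (by simpa using hb)]
  refine ⟨(sumEvalIso M t).hom d, ?_⟩
  have hk := DFunLike.congr_fun (key_comp M t) d
  have : (prodEvalIso M t).hom ((sumToProd F T M).app t ((sumEvalIso M t).hom d)) =
      (prodEvalIso M t).hom ((∏ᶜ M : PersistenceModule F T).map f x) := by
    rw [show (prodEvalIso M t).hom ((sumToProd F T M).app t ((sumEvalIso M t).hom d)) =
      toPiLM M t d from hk, hdz, hz]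
  have hinj : Function.Injective ((prodEvalIso M t).hom.hom : _ →ₗ[F] _) := by
    intro u v huv
    calc u = ((prodEvalIso M t).hom ≫ (prodEvalIso M t).inv) u := by
            rw [Iso.hom_inv_id]; rfl
      _ = (prodEvalIso M t).inv ((prodEvalIso M t).hom u) := rfl
      _ = (prodEvalIso M t).inv ((prodEvalIso M t).hom v) := by rw [huv]
      _ = ((prodEvalIso M t).hom ≫ (prodEvalIso M t).inv) v := rfl
      _ = v := by rw [Iso.hom_inv_id]; rfl
  exact hinj this

lemma exists_factor {s t : T} (h : s < t) (hq : QTame F T (∏ᶜ M)) :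
    ∃ e : (∏ᶜ M : PersistenceModule F T).obj s ⟶ (∐ M : PersistenceModule F T).obj t,
      e ≫ (sumToProd F T M).app t = (∏ᶜ M : PersistenceModule F T).map (homOfLE h.le) := by
  have hinj := sumToProd_app_injective M t
  set φt : (∐ M : PersistenceModule F T).obj t ⟶ (∏ᶜ M : PersistenceModule F T).obj t :=
    (sumToProd F T M).app t with hφt
  let eqv := LinearEquiv.ofInjective (φt.hom : _ →ₗ[F] _) hinj
  refine ⟨ModuleCat.ofHom ((eqv.symm.toLinearMap).comp
    (LinearMap.codRestrict _ ((∏ᶜ M : PersistenceModule F T).map (homOfLE h.le)).hom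
      (fun x => prod_map_mem_range M h hq x))), ?_⟩
  apply ModuleCat.hom_ext
  apply LinearMap.ext
  intro x
  show φt (eqv.symm ⟨(∏ᶜ M : PersistenceModule F T).map (homOfLE h.le) x,
    prod_map_mem_range M h hq x⟩) = _
  have h1 : ∀ w, φt (eqv.symm w) = (w : (∏ᶜ M : PersistenceModule F T).obj t) := by
    intro w
    conv_rhs => rw [← eqv.apply_symm_apply w]
    rw [LinearEquiv.ofInjective_apply]
  rw [h1]

end AuxWeakIso

/-- If the product of a collection of persistence modules is q-tame, then the canonical
map from the direct sum to the product is a weak isomorphism. -/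
theorem sumToProd_isWeakIso {A : Type} (M : A → PersistenceModule F T)
    (hq : QTame F T (∏ᶜ M)) :
    IsWeakIso F T (sumToProd F T M) := by
  classical
  haveI hmonoapp : ∀ X, Mono ((sumToProd F T M).app X) := fun X =>
    (ModuleCat.mono_iff_injective _).mpr (sumToProd_app_injective M X)
  haveI hmono : Mono (sumToProd F T M) := NatTrans.mono_of_mono_app _
  show Ephemeral F T (kernel (sumToProd F T M)) ∧
    Ephemeral F T (cokernel (sumToProd F T M))
  constructor
  · intro s t h
    have hι : kernel.ι (sumToProd F T M) = 0 := by
      rw [← cancel_mono (sumToProd F T M), kernel.condition, zero_comp]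
    have hid : (𝟙 (kernel (sumToProd F T M)) :
        kernel (sumToProd F T M) ⟶ kernel (sumToProd F T M)) = 0 := by
      rw [← cancel_mono (kernel.ι (sumToProd F T M)), Category.id_comp, hι, zero_comp]
    calc (kernel (sumToProd F T M)).map (homOfLE h.le)
        = (kernel (sumToProd F T M)).map (homOfLE h.le) ≫
          (𝟙 (kernel (sumToProd F T M)) :
            kernel (sumToProd F T M) ⟶ kernel (sumToProd F T M)).app t := by
          rw [NatTrans.id_app, Category.comp_id]
      _ = (kernel (sumToProd F T M)).map (homOfLE h.le) ≫
          (0 : kernel (sumToProd F T M) ⟶ kernel (sumToProd F T M)).app t := by rw [hid]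
      _ = 0 := by rw [zero_app, comp_zero]
  · intro s t h
    obtain ⟨e, he⟩ := exists_factor M h hq
    haveI : Epi ((cokernel.π (sumToProd F T M)).app s) := inferInstance
    rw [← cancel_epi ((cokernel.π (sumToProd F T M)).app s), comp_zero]
    have hnat := (cokernel.π (sumToProd F T M)).naturality (homOfLE h.le)
    rw [← hnat, ← he, Category.assoc]
    have hzero : (sumToProd F T M).app t ≫ (cokernel.π (sumToProd F T M)).app t = 0 := by
      rw [← NatTrans.comp_app, cokernel.condition, zero_app]
    rw [hzero, comp_zero]
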